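/- For any linear relation (V,C), the first projection C|_{C^♯} → C^♯/C^♭ (sending (x,y) ∈ C with x,y ∈ C^♯ to the coset of x) is surjective with kernel C|_{C^♭}; likewise for the second projection. Consequently the induced relation on C^♯/C^♭ is automorphic. -/

import Mathlib

variable {K : Type*} [Field K]

section Defs
variable {V : Type*} [AddCommGroup V] [Module K V]

/-- A ℤ-indexed chain through the relation `C`. -/
def IsCChain (C : Submodule K (V × V)) (f : ℤ → V) : Prop :=
  ∀ n : ℤ, (f n, f (n + 1)) ∈ C

/-- `C^♯`: elements lying on a bi-infinite chain. -/
def csharp (C : Submodule K (V × V)) : Set V :=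
  {v | ∃ f : ℤ → V, IsCChain C f ∧ f 0 = v}

/-- `C₊`: elements lying on a bi-infinite chain which is eventually zero to the right. -/
def cplus (C : Submodule K (V × V)) : Set V :=
  {v | ∃ f : ℤ → V, IsCChain C f ∧ f 0 = v ∧ ∃ N : ℤ, ∀ n ≥ N, f n = 0}

/-- `C₋`: elements lying on a bi-infinite chain which is eventually zero to the left. -/
def cminus (C : Submodule K (V × V)) : Set V :=
  {v | ∃ f : ℤ → V, IsCChain C f ∧ f 0 = v ∧ ∃ N : ℤ, ∀ n ≤ N, f n = 0}

/-- `C^♭ = C₊ + C₋`. -/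
def cflat (C : Submodule K (V × V)) : Set V :=
  {v | ∃ a ∈ cplus C, ∃ b ∈ cminus C, v = a + b}

end Defs

section Aux
variable {V : Type*} [AddCommGroup V] [Module K V]

lemma chain_shift {C : Submodule K (V × V)} {f : ℤ → V} (hf : IsCChain C f) (k : ℤ) :
    IsCChain C (fun n => f (n + k)) := by
  intro n
  have := hf (n + k)
  have h : n + k + 1 = n + 1 + k := by ring
  simpa [h] using this

lemma zero_mem_cplus {C : Submodule K (V × V)} : (0 : V) ∈ cplus C :=
  ⟨fun _ => 0, fun _ => by exact C.zero_mem, rfl, 0, fun _ _ => rfl⟩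

lemma zero_mem_cminus {C : Submodule K (V × V)} : (0 : V) ∈ cminus C :=
  ⟨fun _ => 0, fun _ => by exact C.zero_mem, rfl, 0, fun _ _ => rfl⟩

lemma zero_mem_cflat {C : Submodule K (V × V)} : (0 : V) ∈ cflat C :=
  ⟨0, zero_mem_cplus, 0, zero_mem_cminus, by simp⟩

lemma cflat_subset_csharp {C : Submodule K (V × V)} {v : V} (h : v ∈ cflat C) :
    v ∈ csharp C := by
  obtain ⟨a, ⟨g, hg, hg0, _⟩, b, ⟨h', hh, hh0, _⟩, rfl⟩ := h
  exact ⟨fun n => g n + h' n, fun n => by simpa using C.add_mem (hg n) (hh n),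
    by simp [hg0, hh0]⟩

/-- If `(x, y) ∈ C`, `y ∈ C^♯` and `x ∈ C^♭`, then `y ∈ C^♭`. -/
lemma key_fwd {C : Submodule K (V × V)} {x y : V}
    (hxy : (x, y) ∈ C) (hy : y ∈ csharp C) (hx : x ∈ cflat C) : y ∈ cflat C := by
  obtain ⟨f, hf, hf0⟩ := hy
  obtain ⟨a, ⟨g, hg, hg0, N, hN⟩, b, ⟨h, hh, hh0, M, hM⟩, hxab⟩ := hx
  refine ⟨g 1, ⟨fun n => g (n + 1), chain_shift hg 1, rfl, N, fun n hn => hN _ (by omega)⟩,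
    y - g 1, ?_, by abel⟩
  have hb : ((b : V), y - g 1) ∈ C := by
    have hsub := C.sub_mem hxy (hg 0)
    have hx' : x - g 0 = b := by rw [hg0, hxab]; abel
    simpa [Prod.sub_def, hx'] using hsub
  refine ⟨fun n => if n ≤ -1 then h (n + 1) else f n - g (n + 1), ?_, by simp [hf0],
    min (M - 1) (-1), fun n hn => ?_⟩
  · intro n
    rcases lt_trichotomy n (-1) with hlt | heq | hgt
    · have h1 : n ≤ -1 := by omega
      have h2 : n + 1 ≤ -1 := by omega
      have := hh (n + 1)
      simpa [h1, h2] using this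
    · subst heq
      have h1 : (-1 : ℤ) ≤ -1 := le_refl _
      have h2 : ¬ ((-1 : ℤ) + 1 ≤ -1) := by omega
      simpa [h1, h2, hh0, hf0] using hb
    · have h1 : ¬ (n ≤ -1) := by omega
      have h2 : ¬ (n + 1 ≤ -1) := by omega
      have := C.sub_mem (hf n) (hg (n + 1))
      simpa [h1, h2, Prod.sub_def] using this
  · have h1 : n ≤ -1 := by omega
    have h2 : n + 1 ≤ M := by omega
    simp [h1, hM _ h2]

/-- If `(x, y) ∈ C`, `x ∈ C^♯` and `y ∈ C^♭`, then `x ∈ C^♭`. -/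
lemma key_bwd {C : Submodule K (V × V)} {x y : V}
    (hxy : (x, y) ∈ C) (hx : x ∈ csharp C) (hy : y ∈ cflat C) : x ∈ cflat C := by
  obtain ⟨f, hf, hf0⟩ := hx
  obtain ⟨a, ⟨g, hg, hg0, N, hN⟩, b, ⟨h, hh, hh0, M, hM⟩, hyab⟩ := hy
  refine ⟨x - h (-1), ?_, h (-1),
    ⟨fun n => h (n - 1), chain_shift hh (-1), rfl, M + 1, fun n hn => hM _ (by omega)⟩,
    by abel⟩
  have ha : ((x - h (-1) : V), a) ∈ C := by
    have hsub := C.sub_mem hxy (hh (-1))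
    have hy' : y - h 0 = a := by rw [hh0, hyab]; abel
    simpa [Prod.sub_def, hy'] using hsub
  refine ⟨fun n => if 1 ≤ n then g (n - 1) else f n - h (n - 1), ?_, by simp [hf0],
    max (N + 1) 1, fun n hn => ?_⟩
  · intro n
    rcases lt_trichotomy n 0 with hlt | heq | hgt
    · have h1 : ¬ (1 ≤ n) := by omega
      have h2 : ¬ (1 ≤ n + 1) := by omega
      have := C.sub_mem (hf n) (hh (n - 1))
      have he : n - 1 + 1 = n := by ring
      rw [he] at this
      simpa [h1, h2, Prod.sub_def] using this
    · subst heq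
      have h1 : ¬ (1 ≤ (0 : ℤ)) := by omega
      have h2 : (1 : ℤ) ≤ 0 + 1 := by omega
      have he : (0 : ℤ) + 1 - 1 = 0 := by ring
      simpa [h1, h2, he, hg0, hf0] using ha
    · have h1 : (1 : ℤ) ≤ n := by omega
      have h2 : (1 : ℤ) ≤ n + 1 := by omega
      have := hg (n - 1)
      have he : n - 1 + 1 = n := by ring
      rw [he] at this
      have he2 : n + 1 - 1 = n := by ring
      simpa [h1, h2, he2] using this
  · have h1 : (1 : ℤ) ≤ n := by omega
    have h2 : N ≤ n - 1 := by omega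
    simp [h1, hN _ h2]

end Aux

/-- The first projection `C|_{C^♯} → C^♯/C^♭` is surjective with kernel `C|_{C^♭}`,
and likewise for the second projection; consequently the induced relation on
`C^♯/C^♭` is automorphic. Surjectivity is expressed by the existence of a pair in
`C|_{C^♯}` whose relevant coordinate is congruent to a given element of `C^♯`
modulo `C^♭`, and the kernel computation as an equality of subsets of `V × V`. -/
theorem quotient_relation_automorphic
    {V : Type*} [AddCommGroup V] [Module K V] (C : Submodule K (V × V)) :
    (∀ v ∈ csharp C, ∃ p : V × V, p ∈ C ∧ p.1 ∈ csharp C ∧ p.2 ∈ csharp C ∧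
      p.1 - v ∈ cflat C) ∧
    ({p : V × V | p ∈ C ∧ p.1 ∈ csharp C ∧ p.2 ∈ csharp C ∧ p.1 ∈ cflat C} =
      {p : V × V | p ∈ C ∧ p.1 ∈ cflat C ∧ p.2 ∈ cflat C}) ∧
    (∀ v ∈ csharp C, ∃ p : V × V, p ∈ C ∧ p.1 ∈ csharp C ∧ p.2 ∈ csharp C ∧
      p.2 - v ∈ cflat C) ∧
    ({p : V × V | p ∈ C ∧ p.1 ∈ csharp C ∧ p.2 ∈ csharp C ∧ p.2 ∈ cflat C} =
      {p : V × V | p ∈ C ∧ p.1 ∈ cflat C ∧ p.2 ∈ cflat C}) := by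
  refine ⟨?_, ?_, ?_, ?_⟩
  · rintro v ⟨f, hf, hf0⟩
    refine ⟨(v, f 1), by simpa [hf0] using hf 0, ⟨f, hf, hf0⟩,
      ⟨fun n => f (n + 1), chain_shift hf 1, by norm_num⟩, by simpa using zero_mem_cflat⟩
  · ext p
    constructor
    · rintro ⟨hC, h1, h2, hfl⟩
      exact ⟨hC, hfl, key_fwd hC h2 hfl⟩
    · rintro ⟨hC, h1, h2⟩
      exact ⟨hC, cflat_subset_csharp h1, cflat_subset_csharp h2, h1⟩
  · rintro v ⟨f, hf, hf0⟩
    have hm : ((-1 : ℤ)) + 1 = 0 := by ring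
    refine ⟨(f (-1), v), by have := hf (-1); rw [hm, hf0] at this; exact this,
      ⟨fun n => f (n + -1), chain_shift hf (-1), by norm_num⟩, ⟨f, hf, hf0⟩,
      by simpa using zero_mem_cflat⟩
  · ext p
    constructor
    · rintro ⟨hC, h1, h2, hfl⟩
      exact ⟨hC, key_bwd hC h1 hfl, hfl⟩
    · rintro ⟨hC, h1, h2⟩
      exact ⟨hC, cflat_subset_csharp h1, cflat_subset_csharp h2, h2⟩
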